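/- The gain function G(x) = p1·x·φ·r1/(r0 + φ·x) − p0·x on x > 0 attains its unique global maximum at x_max = (√(p1·φ·r0·r1) − √p0·r0)/(√p0·φ), provided x_max > 0: for all x > 0 with x ≠ x_max, G(x_max) > G(x). -/

import Mathlib

theorem stmt16 (φ r0 r1 p0 p1 : ℝ) (hφ0 : 0 < φ) (hφ1 : φ < 1)
    (hr0 : 0 < r0) (hr1 : 0 < r1) (hp0 : 0 < p0) (hp1 : 0 < p1)
    (xmax : ℝ)
    (hxmax : xmax = (Real.sqrt (p1 * φ * r0 * r1) - Real.sqrt p0 * r0) / (Real.sqrt p0 * φ))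
    (hpos : 0 < xmax) :
    ∀ x : ℝ, 0 < x → x ≠ xmax →
      p1 * xmax * (φ * r1 / (r0 + φ * xmax)) - p0 * xmax >
      p1 * x * (φ * r1 / (r0 + φ * x)) - p0 * x := by
  intro x hx hne
  have hA : (0:ℝ) ≤ p1 * φ * r0 * r1 := by positivity
  have hsq0 : (0:ℝ) < Real.sqrt p0 := Real.sqrt_pos.mpr hp0
  obtain ⟨t, ht⟩ : ∃ t, t = r0 + φ * xmax := ⟨_, rfl⟩
  obtain ⟨s, hs⟩ : ∃ s, s = r0 + φ * x := ⟨_, rfl⟩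
  have hsp : 0 < s := by have := mul_pos hφ0 hx; rw [hs]; linarith
  have htp : 0 < t := by have := mul_pos hφ0 hpos; rw [ht]; linarith
  have ht' : t = Real.sqrt (p1 * φ * r0 * r1) / Real.sqrt p0 := by
    rw [ht, hxmax]; field_simp; ring
  have ht2 : p0 * t ^ 2 = p1 * φ * r0 * r1 := by
    rw [ht', div_pow, Real.sq_sqrt hA, Real.sq_sqrt hp0.le]
    field_simp
  have hst : s ≠ t := by
    intro h
    apply hne
    have h2 : φ * x = φ * xmax := by rw [ht] at h; rw [hs] at h; linarith
    exact mul_left_cancel₀ hφ0.ne' h2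
  have hts : t - s ≠ 0 := sub_ne_zero_of_ne (fun h => hst h.symm)
  have hxm : xmax = (t - r0) / φ := by rw [ht]; field_simp; ring
  have hxe : x = (s - r0) / φ := by rw [hs]; field_simp; ring
  rw [← ht, ← hs, hxm, hxe, gt_iff_lt, ← sub_pos]
  have heq : p1 * ((t - r0) / φ) * (φ * r1 / t) - p0 * ((t - r0) / φ) -
      (p1 * ((s - r0) / φ) * (φ * r1 / s) - p0 * ((s - r0) / φ)) =
      p0 * (t - s) ^ 2 / (φ * s) +
      (s - t) / (φ * s * t) * (p0 * t ^ 2 - (p1 * φ * r0 * r1)) := by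
    field_simp
    ring
  rw [heq, ht2, sub_self, mul_zero, add_zero]
  positivity
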